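/- Let f : ℝ^n → ℝ be differentiable with L-Lipschitz gradient, let ρ > 0, and let x, x⁺, λ, λ⁺, z ∈ ℝ^n satisfy λ = ∇f(x), λ⁺ = ∇f(x⁺), and λ⁺ = λ + ρ(z − x⁺). Then ⟨λ⁺ − λ, z − x⁺⟩ = (1/ρ)‖λ⁺ − λ‖², and (1/ρ)‖λ⁺ − λ‖² ≤ (L²/ρ)‖x⁺ − x‖². Consequently, the increase in the augmented Lagrangian caused by the dual update, L_ρ(x⁺, z, λ⁺) − L_ρ(x⁺, z, λ) = ⟨λ⁺ − λ, z − x⁺⟩, is at most (L²/ρ)‖x⁺ − x‖². -/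
import Mathlib


open RealInnerProductSpace

/-- With `λ = ∇f(x)`, `λ⁺ = ∇f(x⁺)` and the dual update
`λ⁺ = λ + ρ(z − x⁺)`, one has `⟪λ⁺ − λ, z − x⁺⟫ = (1/ρ)‖λ⁺ − λ‖²`,
`(1/ρ)‖λ⁺ − λ‖² ≤ (L²/ρ)‖x⁺ − x‖²`, and the augmented-Lagrangian increase
caused by the dual update equals `⟪λ⁺ − λ, z − x⁺⟫` and is at most
`(L²/ρ)‖x⁺ − x‖²`. -/
theorem stmt_2 {n : ℕ} (f : EuclideanSpace ℝ (Fin n) → ℝ) (L ρ : ℝ) (hρ : 0 < ρ)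
    (hf : Differentiable ℝ f)
    (hlip : ∀ x₁ x₂ : EuclideanSpace ℝ (Fin n),
      ‖gradient f x₁ - gradient f x₂‖ ≤ L * ‖x₁ - x₂‖)
    (x xp lam lamp z : EuclideanSpace ℝ (Fin n))
    (hlam : lam = gradient f x) (hlamp : lamp = gradient f xp)
    (hup : lamp = lam + ρ • (z - xp)) :
    ⟪lamp - lam, z - xp⟫ = 1 / ρ * ‖lamp - lam‖ ^ 2 ∧
    1 / ρ * ‖lamp - lam‖ ^ 2 ≤ L ^ 2 / ρ * ‖xp - x‖ ^ 2 ∧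
    (f xp + ⟪lamp, z - xp⟫ + ρ / 2 * ‖z - xp‖ ^ 2) -
        (f xp + ⟪lam, z - xp⟫ + ρ / 2 * ‖z - xp‖ ^ 2) =
      ⟪lamp - lam, z - xp⟫ ∧
    (f xp + ⟪lamp, z - xp⟫ + ρ / 2 * ‖z - xp‖ ^ 2) -
        (f xp + ⟪lam, z - xp⟫ + ρ / 2 * ‖z - xp‖ ^ 2) ≤
      L ^ 2 / ρ * ‖xp - x‖ ^ 2 := by
  have hd : lamp - lam = ρ • (z - xp) := by rw [hup]; abel
  have h1 : ⟪lamp - lam, z - xp⟫ = 1 / ρ * ‖lamp - lam‖ ^ 2 := by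
    have hz : z - xp = (1 / ρ) • (lamp - lam) := by
      rw [hd, smul_smul, one_div_mul_cancel hρ.ne', one_smul]
    rw [hz, real_inner_smul_right, real_inner_self_eq_norm_sq]
  have hlipb : ‖lamp - lam‖ ≤ L * ‖xp - x‖ := by
    rw [hlam, hlamp]; exact hlip xp x
  have h2 : 1 / ρ * ‖lamp - lam‖ ^ 2 ≤ L ^ 2 / ρ * ‖xp - x‖ ^ 2 := by
    have hsq : ‖lamp - lam‖ ^ 2 ≤ (L * ‖xp - x‖) ^ 2 := by
      apply sq_le_sq' _ hlipb
      have := norm_nonneg (lamp - lam)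
      nlinarith [mul_nonneg (norm_nonneg (lamp-lam)) (norm_nonneg (xp-x))]
    calc 1 / ρ * ‖lamp - lam‖ ^ 2 ≤ 1 / ρ * (L * ‖xp - x‖) ^ 2 := by
          apply mul_le_mul_of_nonneg_left hsq (by positivity)
      _ = L ^ 2 / ρ * ‖xp - x‖ ^ 2 := by ring
  have h3 : (f xp + ⟪lamp, z - xp⟫ + ρ / 2 * ‖z - xp‖ ^ 2) -
      (f xp + ⟪lam, z - xp⟫ + ρ / 2 * ‖z - xp‖ ^ 2) = ⟪lamp - lam, z - xp⟫ := by
    rw [inner_sub_left]; ring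
  exact ⟨h1, h2, h3, by rw [h3, h1]; exact h2⟩
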